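/- In the setting of the vector saddle-point characterization: if for all z ∈ g(x̄) and all positive operators S ∈ B⁺(Z,Y) one has S(z) − S̄(z̄) ∉ int Y₊ (where z̄ ∈ g(x̄) is fixed and S̄ ∈ B⁺(Z,Y)), and Z₊, Y₊ are closed pointed convex cones with nonempty interiors in locally convex spaces, then −g(x̄) ⊆ Z₊. -/

import Mathlib

open Pointwise

/-- Key step of Theorem 3.1: if `S z − S̄ z̄ ∉ int Y₊` for every `z ∈ g x̄` and every
positive operator `S`, then `−g(x̄) ⊆ Z₊`. -/
theorem stmt_9 {X Y Z : Type*}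
    [AddCommGroup Y] [Module ℝ Y] [TopologicalSpace Y] [IsTopologicalAddGroup Y]
    [ContinuousSMul ℝ Y] [LocallyConvexSpace ℝ Y]
    [AddCommGroup Z] [Module ℝ Z] [TopologicalSpace Z] [IsTopologicalAddGroup Z]
    [ContinuousSMul ℝ Z] [LocallyConvexSpace ℝ Z]
    (Yp : Set Y) (Zp : Set Z)
    (hYcone : ∀ y1 ∈ Yp, ∀ y2 ∈ Yp, ∀ a b : ℝ, 0 ≤ a → 0 ≤ b → a • y1 + b • y2 ∈ Yp)
    (hZcone : ∀ z1 ∈ Zp, ∀ z2 ∈ Zp, ∀ a b : ℝ, 0 ≤ a → 0 ≤ b → a • z1 + b • z2 ∈ Zp)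
    (hYclosed : IsClosed Yp) (hZclosed : IsClosed Zp)
    (hYpointed : Yp ∩ (-Yp) = {0}) (hZpointed : Zp ∩ (-Zp) = {0})
    (hYint : (interior Yp).Nonempty) (hZint : (interior Zp).Nonempty)
    (g : X → Set Z) (xbar : X)
    (Sbar : Z →L[ℝ] Y) (hSbar : ∀ z ∈ Zp, Sbar z ∈ Yp)
    (zbar : Z) (hzbar : zbar ∈ g xbar)
    (hsaddle : ∀ z ∈ g xbar, ∀ S : Z →L[ℝ] Y, (∀ z' ∈ Zp, S z' ∈ Yp) →
      S z - Sbar zbar ∉ interior Yp) :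
    ∀ z ∈ g xbar, -z ∈ Zp := by
  intro z hz
  by_contra hnz
  -- Z₊ is convex
  have hZconv : Convex ℝ Zp := fun a ha b hb s t hs ht _ => hZcone a ha b hb s t hs ht
  obtain ⟨f, u, hfu, hux⟩ := geometric_hahn_banach_closed_point hZconv hZclosed hnz
  obtain ⟨w0, hw0⟩ := hZint
  have h0Z : (0 : Z) ∈ Zp := by
    have := hZcone w0 (interior_subset hw0) w0 (interior_subset hw0) 0 0 le_rfl le_rfl
    simpa using this
  have hu0 : 0 < u := by have := hfu 0 h0Z; simpa using this
  have hfnonpos : ∀ w ∈ Zp, f w ≤ 0 := by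
    intro w hw
    by_contra h
    push_neg at h
    obtain ⟨n, hn⟩ := exists_nat_gt (u / f w)
    have hmem : (n : ℝ) • w ∈ Zp := by
      have := hZcone w hw w hw (n : ℝ) 0 (by positivity) le_rfl
      simpa using this
    have h2 := hfu _ hmem
    rw [map_smul] at h2
    have : u / f w * f w < (n : ℝ) * f w := by
      exact mul_lt_mul_of_pos_right hn h
    rw [div_mul_cancel₀ _ (ne_of_gt h)] at this
    simp only [smul_eq_mul] at h2
    linarith
  have hfz : f z < 0 := by
    have h1 : u < f (-z) := hux
    rw [map_neg] at h1
    linarith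
  have hφz : 0 < -f z := by linarith
  -- interior point of Y₊ and the fixed vector ȳ
  obtain ⟨y0, hy0⟩ := hYint
  set ybar := Sbar zbar with hybar
  -- positive scaling preserves the interior of the cone
  have hscale : ∀ (c : ℝ), 0 < c → ∀ y ∈ interior Yp, c • y ∈ interior Yp := by
    intro c hc y hy
    have hopen : IsOpen (c • interior Yp) := isOpen_interior.smul₀ (ne_of_gt hc)
    have hsub : c • interior Yp ⊆ Yp := by
      rintro _ ⟨y', hy', rfl⟩
      have := hYcone y' (interior_subset hy') y' (interior_subset hy') c 0 hc.le le_rfl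
      simpa using this
    exact interior_maximal hsub hopen ⟨y, hy, rfl⟩
  -- find t > 0 with y0 - t • ȳ ∈ interior Y₊
  have hcont : Continuous fun s : ℝ => y0 - s • ybar := by continuity
  have hpre : IsOpen ((fun s : ℝ => y0 - s • ybar) ⁻¹' interior Yp) :=
    isOpen_interior.preimage hcont
  have h0pre : (0 : ℝ) ∈ (fun s : ℝ => y0 - s • ybar) ⁻¹' interior Yp := by
    simpa using hy0
  obtain ⟨ε, hε, hball⟩ := Metric.isOpen_iff.1 hpre 0 h0pre
  set t : ℝ := ε / 2 with ht
  have htpos : 0 < t := by positivity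
  have htmem : y0 - t • ybar ∈ interior Yp := by
    apply hball
    simp only [Metric.mem_ball, Real.dist_eq, sub_zero, ht]
    rw [abs_of_pos (by positivity)]
    linarith
  -- build the positive operator S
  set c : ℝ := (t * (-f z))⁻¹ with hc
  have hcpos : 0 < c := by
    rw [hc]
    positivity
  set S : Z →L[ℝ] Y := c • ((-f).smulRight y0) with hS
  have hSapp : ∀ w : Z, S w = (c * (-f w)) • y0 := by
    intro w
    simp [hS, mul_smul]
  have hSpos : ∀ z' ∈ Zp, S z' ∈ Yp := by
    intro z' hz'
    rw [hSapp]
    have hnn : 0 ≤ c * (-f z') := by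
      have := hfnonpos z' hz'
      have : 0 ≤ -f z' := by linarith
      positivity
    have := hYcone y0 (interior_subset hy0) y0 (interior_subset hy0) (c * (-f z')) 0 hnn le_rfl
    simpa using this
  have hSz : S z = t⁻¹ • y0 := by
    rw [hSapp, hc]
    congr 1
    have hne : f z * t ≠ 0 := mul_ne_zero (ne_of_lt hfz) (ne_of_gt htpos)
    field_simp
    exact div_self (ne_of_lt hfz)
  have hmem2 : S z - Sbar zbar ∈ interior Yp := by
    have : S z - Sbar zbar = t⁻¹ • (y0 - t • ybar) := by
      rw [hSz, smul_sub, smul_smul, inv_mul_cancel₀ (ne_of_gt htpos), one_smul, hybar]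
    rw [this]
    exact hscale _ (by positivity) _ htmem
  exact hsaddle z hz S hSpos hmem2
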